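/- For complex numbers q and L with 0 < |q| < 1 and L ≠ 0, and for a rational number r, define the modified sigma function σ[L, r] = q^{−⌊r⌋(⌊r⌋+1)/2} · (−L)^{⌊r⌋} · σ(L, q), where ⌊r⌋ ∈ ℤ is the floor of r and the powers are integer (possibly negative) powers of nonzero complex numbers. Then σ[qL, r+1] = σ[L, r]. -/

import Mathlib

open Filter

open Filter

/-- If `f` is summable then `∏ (1 + f k)` is multipliable. -/
lemma multipliable_one_add_of_summable' {f : ℕ → ℂ} (hf : Summable f) :
    Multipliable (fun k => 1 + f k) := by
  by_cases h : ∀ k, 1 + f k ≠ 0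
  · have hlog : Summable (fun n => Complex.log (1 + f n)) := by
      have htend : Tendsto f atTop (nhds 0) := hf.tendsto_atTop_zero
      have hev : ∀ᶠ k in atTop, ‖Complex.log (1 + f k)‖ ≤ (3/2) * ‖f k‖ := by
        filter_upwards [htend.eventually (Metric.ball_mem_nhds 0 (by norm_num : (0:ℝ) < 1/2))]
          with k hk
        exact Complex.norm_log_one_add_half_le_self
          (by simpa [dist_eq_norm] using hk.le)
      rw [← Nat.cofinite_eq_atTop] at hev
      exact Summable.of_norm_bounded_eventually (hf.norm.mul_left (3/2)) hev
    exact Complex.multipliable_one_add_of_summable hf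
  · push_neg at h
    obtain ⟨k0, hk0⟩ := h
    refine ⟨0, ?_⟩
    have hev : ∀ᶠ s : Finset ℕ in atTop, (∏ i ∈ s, (1 + f i)) = 0 := by
      filter_upwards [eventually_ge_atTop ({k0} : Finset ℕ)] with s hs
      exact Finset.prod_eq_zero (hs (Finset.mem_singleton_self k0)) hk0
    exact Tendsto.congr' (hev.mono fun s hs => hs.symm) tendsto_const_nhds

lemma multipliable_of_summable_sub_one' {f : ℕ → ℂ} (h : Summable (fun k => f k - 1)) :
    Multipliable f := by
  simpa using multipliable_one_add_of_summable' h

open Filter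

lemma summable_geom_mul' {q : ℂ} (hq1 : ‖q‖ < 1) (c : ℂ) :
    Summable (fun k : ℕ => q ^ (k+1) * c) := by
  have h : Summable (fun k : ℕ => q ^ k) :=
    summable_geometric_of_norm_lt_one (by simpa using hq1)
  exact (h.mul_right (q * c)).congr fun k => by ring

lemma summable_geom_mul0' {q : ℂ} (hq1 : ‖q‖ < 1) (c : ℂ) :
    Summable (fun k : ℕ => q ^ k * c) :=
  (summable_geometric_of_norm_lt_one
    (by simpa using hq1)).mul_right c

-- multipliable of 1 - q^(k+1) x  and 1 - q^k x
example {q x : ℂ} (hq1 : ‖q‖ < 1) :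
    Summable (fun k : ℕ => (1 - q^(k+1)*x) - 1) := by
  simpa using (summable_geom_mul' hq1 x).neg

-- inverse factor: (1 - q^(k+1))⁻¹ - 1 = q^(k+1) / (1 - q^(k+1)), summable
lemma summable_inv_sub_one {q : ℂ} (hq1 : ‖q‖ < 1) :
    Summable (fun k : ℕ => (1 - q^(k+1))⁻¹ - 1) := by
  have hne : ∀ k : ℕ, (1 : ℂ) - q^(k+1) ≠ 0 := by
    intro k
    have : ‖q^(k+1)‖ < 1 := by
      rw [norm_pow]
      exact pow_lt_one₀ (norm_nonneg q) hq1 (Nat.succ_ne_zero k)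
    intro h
    rw [sub_eq_zero] at h
    simp [← h] at this
  have hbound : ∀ k : ℕ, ‖(1 - q^(k+1))⁻¹ - 1‖ ≤ (1 - ‖q‖)⁻¹ * ‖q‖ ^ (k+1) := by
    intro k
    have heq : (1 - q^(k+1))⁻¹ - 1 = q^(k+1) / (1 - q^(k+1)) := by
      rw [eq_div_iff (hne k), sub_mul, inv_mul_cancel₀ (hne k)]
      ring
    rw [heq]
    have hlow : 1 - ‖q‖ ≤ ‖1 - q^(k+1)‖ := by
      have h1 : ‖q^(k+1)‖ ≤ ‖q‖ := by
        rw [norm_pow]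
        calc ‖q‖ ^ (k+1) ≤ ‖q‖ ^ 1 :=
              pow_le_pow_of_le_one (norm_nonneg q) hq1.le (by omega)
          _ = ‖q‖ := pow_one _
      calc 1 - ‖q‖ ≤ 1 - ‖q^(k+1)‖ := by linarith
        _ ≤ ‖1 - q^(k+1)‖ := by
            have := norm_sub_norm_le (1:ℂ) (q^(k+1))
            simpa using this
    have hpos : (0:ℝ) < 1 - ‖q‖ := by
      have := norm_nonneg q; linarith
    rw [norm_div, norm_pow]
    rw [div_le_iff₀ (lt_of_lt_of_le hpos hlow)]
    calc ‖q‖ ^ (k+1)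
        = ‖q‖ ^ (k+1) * 1 := (mul_one _).symm
      _ ≤ ((1 - ‖q‖)⁻¹ * ‖q‖ ^ (k+1)) * ‖1 - q^(k+1)‖ := by
          rw [mul_comm ((1 - ‖q‖)⁻¹) _, mul_assoc]
          refine mul_le_mul_of_nonneg_left ?_ (by positivity)
          rw [← div_eq_inv_mul, le_div_iff₀ hpos, one_mul]
          exact hlow
  refine Summable.of_norm_bounded ?_ hbound
  have : Summable (fun k : ℕ => ‖q‖ ^ k) :=
    summable_geometric_of_lt_one (norm_nonneg q) hq1
  exact (this.mul_left ((1 - ‖q‖)⁻¹ * ‖q‖)).congr fun k => by ring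

/-- The Weierstrass sigma product
`σ(L,q) = (1 − L) · ∏_{k≥1} (1 − q^k L)(1 − q^k L⁻¹)/(1 − q^k)²`. -/
noncomputable def weierstrassSigma (L q : ℂ) : ℂ :=
  (1 - L) * ∏' k : ℕ,
    ((1 - q ^ (k + 1) * L) * (1 - q ^ (k + 1) * L⁻¹)) / (1 - q ^ (k + 1)) ^ 2

/-- The modified sigma function
`σ[L,r] = q^{−⌊r⌋(⌊r⌋+1)/2} · (−L)^{⌊r⌋} · σ(L,q)`, with integer powers. -/
noncomputable def weierstrassSigmaMod (q L : ℂ) (r : ℚ) : ℂ :=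
  q ^ ((-(⌊r⌋ * (⌊r⌋ + 1))) / 2 : ℤ) * (-L) ^ (⌊r⌋ : ℤ) * weierstrassSigma L q

lemma sigma_shift {q : ℂ} (hq : q ≠ 0) (hq1 : ‖q‖ < 1) {L : ℂ} (hL : L ≠ 0) :
    weierstrassSigma (q * L) q = -L⁻¹ * weierstrassSigma L q := by
  -- multipliability of elementary factor families
  have hA : ∀ x : ℂ, Multipliable (fun k : ℕ => 1 - q^(k+1)*x) := fun x =>
    multipliable_of_summable_sub_one' (by simpa using (summable_geom_mul' hq1 x).neg)
  have hA0 : ∀ x : ℂ, Multipliable (fun k : ℕ => 1 - q^k*x) := fun x =>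
    multipliable_of_summable_sub_one' (by simpa using (summable_geom_mul0' hq1 x).neg)
  have hI : Multipliable (fun k : ℕ => ((1 : ℂ) - q^(k+1))⁻¹) :=
    multipliable_of_summable_sub_one' (summable_inv_sub_one hq1)
  have hD : Multipliable (fun k : ℕ => (((1 : ℂ) - q^(k+1))^2)⁻¹) := by
    have := hI.mul hI
    refine this.congr fun k => ?_
    rw [← mul_inv]
    ring_nf
  -- expansion of sigma as product of three tprods
  have expand : ∀ x : ℂ, weierstrassSigma x q
      = (1-x) * ((∏' k : ℕ, (1 - q^(k+1)*x)) *
          ((∏' k : ℕ, (1 - q^(k+1)*x⁻¹)) * ∏' k : ℕ, (((1:ℂ)-q^(k+1))^2)⁻¹)) := by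
    intro x
    unfold weierstrassSigma
    congr 1
    rw [← Multipliable.tprod_mul (hA x⁻¹) hD, ← Multipliable.tprod_mul (hA x) ((hA x⁻¹).mul hD)]
    exact tprod_congr fun k => by rw [div_eq_mul_inv, mul_assoc]
  -- index shift for the L-part
  have shiftL : ∏' k : ℕ, (1 - q^(k+1)*L)
      = (1 - q*L) * ∏' k : ℕ, (1 - q^(k+1)*(q*L)) := by
    have hsh : Multipliable (fun n : ℕ => 1 - q^(n+1+1)*L) :=
      (hA (q*L)).congr fun k => by ring_nf
    rw [tprod_eq_zero_mul' (f := fun k : ℕ => 1 - q^(k+1)*L) hsh]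
    congr 1
    · norm_num
    · exact tprod_congr fun k => by ring_nf
  -- the (q*L)⁻¹ family is the shifted-down L⁻¹ family
  have eB : (fun k : ℕ => 1 - q^(k+1)*(q*L)⁻¹) = fun k : ℕ => 1 - q^k*L⁻¹ := by
    funext k
    congr 1
    rw [mul_inv, pow_succ]
    field_simp
  have shiftB : ∏' k : ℕ, ((1:ℂ) - q^k*L⁻¹)
      = (1 - L⁻¹) * ∏' k : ℕ, (1 - q^(k+1)*L⁻¹) := by
    rw [tprod_eq_zero_mul' (f := fun k : ℕ => 1 - q^k*L⁻¹) (hA L⁻¹)]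
    norm_num
  rw [expand (q*L), expand L, eB, shiftB]
  rw [shiftL]
  have hinv : (1 : ℂ) - L⁻¹ = -L⁻¹ * (1 - L) := by
    field_simp
    ring
  rw [hinv]
  ring

theorem stmt12 (q L : ℂ) (hq0 : 0 < ‖q‖) (hq1 : ‖q‖ < 1)
    (hL : L ≠ 0) (r : ℚ) :
    weierstrassSigmaMod q (q * L) (r + 1) = weierstrassSigmaMod q L r := by
  have hq : q ≠ 0 := by
    intro h; rw [h] at hq0; simp at hq0
  have hσ := sigma_shift hq hq1 hL
  have hnL : (-L : ℂ) ≠ 0 := neg_ne_zero.mpr hL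
  unfold weierstrassSigmaMod
  rw [Int.floor_add_one, hσ]
  set n := ⌊r⌋ with hn
  obtain ⟨m, hm⟩ : Even (n * (n + 1)) := Int.even_mul_succ_self n
  have key : (n + 1) * ((n + 1) + 1) = n * (n + 1) + 2 * (n + 1) := by ring
  have h1 : (-((n + 1) * ((n + 1) + 1))) / 2 = -(m + n + 1) := by omega
  have h2 : (-(n * (n + 1))) / 2 = -m := by omega
  rw [h1, h2]
  have hqL : -(q * L) = (-L) * q := by ring
  rw [hqL, mul_zpow]
  have e1 : (q : ℂ) ^ (-(m + n + 1)) * q ^ ((n : ℤ) + 1) = q ^ (-m) := by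
    rw [← zpow_add₀ hq]; congr 1; ring
  have e2 : ((-L) : ℂ) ^ ((n : ℤ) + 1) * (-L)⁻¹ = (-L) ^ (n : ℤ) := by
    rw [← zpow_sub_one₀ hnL]; congr 1; ring
  have e3 : (-L⁻¹ : ℂ) = (-L)⁻¹ := by rw [inv_neg]
  rw [e3]
  calc q ^ (-(m + n + 1)) * ((-L) ^ ((n:ℤ) + 1) * q ^ ((n:ℤ) + 1)) *
        ((-L)⁻¹ * weierstrassSigma L q)
      = (q ^ (-(m + n + 1)) * q ^ ((n:ℤ) + 1)) * ((-L) ^ ((n:ℤ) + 1) * (-L)⁻¹) *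
        weierstrassSigma L q := by ring
    _ = q ^ (-m) * (-L) ^ (n : ℤ) * weierstrassSigma L q := by rw [e1, e2]
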